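/- Let P ⊆ [0,1]^n be the intersection of the box [0,1]^n with all FS inequalities of a parity-check matrix H, and let x* be any point of P. Then no row i of H can have exactly one index j ∈ N_i with x*_j non-integral; i.e., if x*_j ∈ (0,1) for exactly one j ∈ N_i, then x* violates some FS inequality of row i. -/

import Mathlib

/-- No point of the box `[0,1]ⁿ` satisfying all forbidden set inequalities of a
parity-check matrix `H` can have exactly one non-integral coordinate in the
neighborhood `N_i` of any check node `i`. -/
theorem no_check_with_single_fractional_neighbor (m n : ℕ)
    (H : Matrix (Fin m) (Fin n) (ZMod 2)) (x : Fin n → ℝ)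
    (hbox : ∀ j, 0 ≤ x j ∧ x j ≤ 1)
    (hFS : ∀ i : Fin m, ∀ S ⊆ Finset.univ.filter (fun j => H i j ≠ 0),
      Odd S.card →
        ∑ j ∈ S, x j - ∑ j ∈ (Finset.univ.filter (fun j => H i j ≠ 0)) \ S, x j ≤
          (S.card : ℝ) - 1)
    (i : Fin m) :
    ((Finset.univ.filter (fun j => H i j ≠ 0)).filter
        (fun j => 0 < x j ∧ x j < 1)).card ≠ 1 := by
  intro hcard
  set N := Finset.univ.filter (fun j => H i j ≠ 0) with hN
  obtain ⟨j0, hj0⟩ := Finset.card_eq_one.mp hcard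
  have hj0mem : j0 ∈ N ∧ 0 < x j0 ∧ x j0 < 1 := by
    have : j0 ∈ N.filter (fun j => 0 < x j ∧ x j < 1) :=
      hj0 ▸ Finset.mem_singleton_self j0
    simpa [Finset.mem_filter] using this
  obtain ⟨hj0N, hj0pos, hj0lt⟩ := hj0mem
  have hval : ∀ j ∈ N, j ≠ j0 → x j = 0 ∨ x j = 1 := by
    intro j hjN hne
    by_contra h
    push_neg at h
    have hj : j ∈ N.filter (fun j => 0 < x j ∧ x j < 1) := by
      refine Finset.mem_filter.mpr ⟨hjN, ?_, ?_⟩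
      · exact lt_of_le_of_ne (hbox j).1 (Ne.symm h.1)
      · exact lt_of_le_of_ne (hbox j).2 h.2
    rw [hj0] at hj
    exact hne (Finset.mem_singleton.mp hj)
  set A := N.filter (fun j => x j = 1) with hA
  have hAsub : A ⊆ N := Finset.filter_subset _ _
  have hj0A : j0 ∉ A := fun h => absurd (Finset.mem_filter.mp h).2 (by linarith)
  have hsumA : ∑ j ∈ A, x j = A.card := by
    rw [Finset.sum_congr rfl (fun j hj => (Finset.mem_filter.mp hj).2)]
    simp
    rfl
  have hzero : ∀ j ∈ N, j ∉ A → j ≠ j0 → x j = 0 := by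
    intro j hjN hjA hne
    rcases hval j hjN hne with h | h
    · exact h
    · exact absurd (Finset.mem_filter.mpr ⟨hjN, h⟩) hjA
  rcases Nat.even_or_odd A.card with hev | hodd
  · have hS : insert j0 A ⊆ N := Finset.insert_subset hj0N hAsub
    have hcardS : (insert j0 A).card = A.card + 1 := Finset.card_insert_of_notMem hj0A
    have hoddS : Odd (insert j0 A).card := by rw [hcardS]; exact hev.add_one
    have hineq := hFS i _ hS hoddS
    have hsumS : ∑ j ∈ insert j0 A, x j = x j0 + A.card := by
      rw [Finset.sum_insert hj0A, hsumA]
    have hsdiff : ∑ j ∈ N \ insert j0 A, x j = 0 := by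
      apply Finset.sum_eq_zero
      intro j hj
      rw [Finset.mem_sdiff, Finset.mem_insert] at hj
      exact hzero j hj.1 (fun h => hj.2 (Or.inr h)) (fun h => hj.2 (Or.inl h))
    rw [hsumS, hsdiff, hcardS] at hineq
    push_cast at hineq
    linarith
  · have hineq := hFS i A hAsub hodd
    have hsdiff : ∑ j ∈ N \ A, x j = x j0 := by
      apply Finset.sum_eq_single_of_mem j0 (Finset.mem_sdiff.mpr ⟨hj0N, hj0A⟩)
      intro j hj hne
      rw [Finset.mem_sdiff] at hj
      exact hzero j hj.1 hj.2 hne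
    rw [hsumA, hsdiff] at hineq
    linarith
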